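/- For ε ∈ (0,1/2) let a_ε : (0,1) → (0,∞) be measurable with a_ε(x) ≥ 1 for all x ∈ [ε, 1−ε], and let f_ε : (0,1) → ℝ be continuously differentiable. Assume: (i) sup_{ε} ∫₀¹ f_ε(x)² dx < ∞; (ii) sup_{ε} ∫₀¹ a_ε(x) f_ε′(x)² dx < ∞; and (iii) there exists f ∈ L²(0,1) such that ∫₀¹ f_ε g dx → ∫₀¹ f g dx for every g ∈ L²(0,1) as ε → 0⁺. Then there exists a continuous function f̄ : [0,1] → ℝ with f̄ = f almost everywhere on (0,1), and f_ε(ε) → f̄(0) and f_ε(1−ε) → f̄(1) as ε → 0⁺. -/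

import Mathlib

open MeasureTheory
open scoped ENNReal
open Set Filter
open scoped Topology
noncomputable section

/-- Cauchy–Schwarz for a continuous function on an interval. -/
lemma tc_cs_aux {g : ℝ → ℝ} {u v : ℝ} (huv : u ≤ v) (hg : ContinuousOn g (Icc u v)) :
    |∫ t in Ioc u v, g t| ≤ Real.sqrt (v - u) * Real.sqrt (∫ t in Ioc u v, (g t) ^ 2) := by
  set μ := volume.restrict (Ioc u v) with hμ
  haveI : IsFiniteMeasure μ := by
    constructor
    rw [hμ, Measure.restrict_apply_univ]
    exact measure_Ioc_lt_top
  have hgi : IntegrableOn (fun t => (g t) ^ 2) (Ioc u v) volume :=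
    ((hg.pow 2).integrableOn_Icc).mono_set Ioc_subset_Icc_self
  have hgm : AEStronglyMeasurable g μ :=
    ((hg.mono Ioc_subset_Icc_self).aestronglyMeasurable measurableSet_Ioc)
  have hmem : MemLp (fun t => |g t|) 2 μ := by
    have habs : AEStronglyMeasurable (fun t => |g t|) μ := by
      simpa [Real.norm_eq_abs] using hgm.norm
    rw [memLp_two_iff_integrable_sq habs]
    have : IntegrableOn (fun t => (g t) ^ 2) (Ioc u v) volume := hgi
    refine this.congr ?_
    filter_upwards with x using (sq_abs (g x)).symm
  have hone : MemLp (fun _ : ℝ => (1 : ℝ)) 2 μ := memLp_const 1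
  have hpq : Real.HolderConjugate 2 2 := ⟨by norm_num, by norm_num, by norm_num⟩
  have key := integral_mul_le_Lp_mul_Lq_of_nonneg (μ := μ) hpq
    (f := fun t => |g t|) (g := fun _ => (1 : ℝ))
    (Eventually.of_forall fun x => abs_nonneg _) (Eventually.of_forall fun _ => zero_le_one)
    (by simpa using hmem) (by simpa using hone)
  have h1 : |∫ t in Ioc u v, g t| ≤ ∫ t in Ioc u v, |g t| := by
    simpa [Real.norm_eq_abs] using
      norm_integral_le_integral_norm (μ := μ) g
  have h2 : ∫ t in Ioc u v, |g t| = ∫ a, |g a| * 1 ∂μ := by simp [hμ]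
  have h3 : (∫ a, |g a| ^ (2:ℝ) ∂μ) = ∫ t in Ioc u v, (g t) ^ 2 := by
    apply integral_congr_ae
    filter_upwards with x
    rw [show ((2:ℝ) = ((2:ℕ):ℝ)) by norm_num, Real.rpow_natCast, sq_abs]
  have h4 : (∫ _ : ℝ, (1:ℝ) ^ (2:ℝ) ∂μ) = v - u := by
    simp [hμ, huv, Real.volume_Ioc, ENNReal.toReal_ofReal (by linarith : (0:ℝ) ≤ v - u)]
  calc |∫ t in Ioc u v, g t| ≤ ∫ a, |g a| * 1 ∂μ := h2 ▸ h1
    _ ≤ (∫ a, |g a| ^ (2:ℝ) ∂μ) ^ (1/(2:ℝ)) * (∫ _, (1:ℝ) ^ (2:ℝ) ∂μ) ^ (1/(2:ℝ)) := key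
    _ = Real.sqrt (v - u) * Real.sqrt (∫ t in Ioc u v, (g t) ^ 2) := by
        rw [h3, h4, ← Real.sqrt_eq_rpow, ← Real.sqrt_eq_rpow, mul_comm]

/-- Hölder estimate from an `L²` bound on the derivative. -/
lemma tc_holder_aux {φ φ' : ℝ → ℝ} {u v C : ℝ}
    (hd : ∀ t ∈ Icc u v, HasDerivAt φ (φ' t) t)
    (hc : ContinuousOn φ' (Icc u v)) (huv : u ≤ v)
    (hE : ∫ t in Ioc u v, (φ' t) ^ 2 ≤ C) :
    |φ v - φ u| ≤ Real.sqrt C * Real.sqrt (v - u) := by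
  have hii : IntervalIntegrable φ' volume u v :=
    (hc.mono (by rw [uIcc_of_le huv])).intervalIntegrable
  have hftc : ∫ t in u..v, φ' t = φ v - φ u :=
    intervalIntegral.integral_eq_sub_of_hasDerivAt
      (fun t ht => hd t (by rwa [uIcc_of_le huv] at ht)) hii
  have h0 : ∫ t in u..v, φ' t = ∫ t in Ioc u v, φ' t := intervalIntegral.integral_of_le huv
  have hcs := tc_cs_aux huv hc
  have hsq : Real.sqrt (∫ t in Ioc u v, (φ' t) ^ 2) ≤ Real.sqrt C := Real.sqrt_le_sqrt hE
  calc |φ v - φ u| = |∫ t in Ioc u v, φ' t| := by rw [← hftc, h0]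
    _ ≤ Real.sqrt (v - u) * Real.sqrt (∫ t in Ioc u v, (φ' t) ^ 2) := hcs
    _ ≤ Real.sqrt (v - u) * Real.sqrt C :=
        mul_le_mul_of_nonneg_left hsq (Real.sqrt_nonneg _)
    _ = Real.sqrt C * Real.sqrt (v - u) := mul_comm _ _

/-- Average of `h` over the interval `(c-δ, c+δ)`. -/
def tcAvg (h : ℝ → ℝ) (c δ : ℝ) : ℝ := (∫ t in Ioc (c - δ) (c + δ), h t) / (2 * δ)

/-- Pointwise representative of `flim` in the interior, as a limit of averages. -/
def tcF (flim : ℝ → ℝ) (x : ℝ) : ℝ := limUnder (𝓝[>] (0:ℝ)) (fun δ => tcAvg flim x δ)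

/-- Continuous representative of `flim` on `[0,1]`. -/
def tcBar (flim : ℝ → ℝ) (x : ℝ) : ℝ := limUnder (𝓝[Ioo (0:ℝ) 1] x) (tcF flim)

set_option maxHeartbeats 1000000 in
/-- One-dimensional convergence of traces at distance `ε` from the boundary: for a family
`f_ε` of continuously differentiable functions on `(0,1)` with uniformly bounded `L²`
norms and uniformly bounded weighted energies `∫₀¹ a_ε |f_ε′|²` (with `a_ε ≥ 1` on
`[ε, 1−ε]`), converging weakly in `L²(0,1)` to `f`, the limit `f` has a continuous
representative `f̄` on `[0,1]` and `f_ε(ε) → f̄(0)`, `f_ε(1−ε) → f̄(1)` as `ε → 0⁺`. -/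
theorem trace_convergence_1d
    (a : ℝ → ℝ → ℝ)
    (ha_meas : ∀ ε ∈ Set.Ioo (0:ℝ) (1/2), Measurable (a ε))
    (ha_ge : ∀ ε ∈ Set.Ioo (0:ℝ) (1/2), ∀ x ∈ Set.Icc ε (1 - ε), 1 ≤ a ε x)
    (f f' : ℝ → ℝ → ℝ)
    (hderiv : ∀ ε ∈ Set.Ioo (0:ℝ) (1/2), ∀ x ∈ Set.Ioo (0:ℝ) 1,
      HasDerivAt (f ε) (f' ε x) x)
    (hf'c : ∀ ε ∈ Set.Ioo (0:ℝ) (1/2), ContinuousOn (f' ε) (Set.Ioo 0 1))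
    (hL2 : ∃ C : ℝ, ∀ ε ∈ Set.Ioo (0:ℝ) (1/2),
      ∫⁻ x in Set.Ioo (0:ℝ) 1, ENNReal.ofReal ((f ε x) ^ 2) ≤ ENNReal.ofReal C)
    (hE : ∃ C : ℝ, ∀ ε ∈ Set.Ioo (0:ℝ) (1/2),
      ∫⁻ x in Set.Ioo (0:ℝ) 1, ENNReal.ofReal (a ε x * (f' ε x) ^ 2) ≤ ENNReal.ofReal C)
    (flim : ℝ → ℝ) (hflim_meas : Measurable flim)
    (hflim_L2 : ∫⁻ x in Set.Ioo (0:ℝ) 1, ENNReal.ofReal ((flim x) ^ 2) < ⊤)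
    (hweak : ∀ g : ℝ → ℝ, Measurable g →
      (∫⁻ x in Set.Ioo (0:ℝ) 1, ENNReal.ofReal ((g x) ^ 2)) < ⊤ →
      Filter.Tendsto (fun ε => ∫ x in Set.Ioo (0:ℝ) 1, f ε x * g x)
        (nhdsWithin 0 (Set.Ioo 0 (1/2)))
        (nhds (∫ x in Set.Ioo (0:ℝ) 1, flim x * g x))) :
    ∃ fbar : ℝ → ℝ, ContinuousOn fbar (Set.Icc 0 1) ∧
      (∀ᵐ x ∂(volume.restrict (Set.Ioo (0:ℝ) 1)), fbar x = flim x) ∧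
      Filter.Tendsto (fun ε => f ε ε) (nhdsWithin 0 (Set.Ioo 0 (1/2))) (nhds (fbar 0)) ∧
      Filter.Tendsto (fun ε => f ε (1 - ε)) (nhdsWithin 0 (Set.Ioo 0 (1/2)))
        (nhds (fbar 1)) := by
  classical
  obtain ⟨CE, hCE⟩ := hE
  set C₁ : ℝ := max CE 0 with hC₁def
  have hC₁ : 0 ≤ C₁ := le_max_right _ _
  set K : ℝ := Real.sqrt C₁ with hKdef
  have hK : 0 ≤ K := Real.sqrt_nonneg _
  set l : Filter ℝ := nhdsWithin 0 (Set.Ioo 0 (1/2)) with hldef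
  haveI hlNB : l.NeBot := by
    rw [hldef]
    refine mem_closure_iff_nhdsWithin_neBot.mp ?_
    rw [closure_Ioo (by norm_num : (0:ℝ) ≠ 1/2)]
    exact ⟨le_refl 0, by norm_num⟩
  have hev : ∀ m : ℝ, 0 < m → ∀ᶠ ε in l, ε < m := by
    intro m hm
    rw [hldef]
    exact mem_nhdsWithin_of_mem_nhds (Iio_mem_nhds hm)
  have hmem : ∀ᶠ ε in l, ε ∈ Set.Ioo (0:ℝ) (1/2) := by
    rw [hldef]; exact eventually_mem_nhdsWithin
  have hIccSub : ∀ {ε : ℝ}, ε ∈ Set.Ioo (0:ℝ) (1/2) → Set.Icc ε (1-ε) ⊆ Set.Ioo 0 1 := by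
    intro ε hε x hx
    obtain ⟨h1, h2⟩ := hε
    exact ⟨lt_of_lt_of_le h1 hx.1, lt_of_le_of_lt hx.2 (by linarith)⟩
  -- energy bound
  have energy : ∀ ε ∈ Set.Ioo (0:ℝ) (1/2), ∀ u v : ℝ, ε ≤ u → u ≤ v → v ≤ 1 - ε →
      ∫ t in Set.Ioc u v, (f' ε t) ^ 2 ≤ C₁ := by
    intro ε hε u v hu huv hv
    have hsub : Set.Icc u v ⊆ Set.Icc ε (1-ε) := Set.Icc_subset_Icc hu hv
    have hsub2 : Set.Icc u v ⊆ Set.Ioo 0 1 := fun x hx => hIccSub hε (hsub hx)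
    have hci : IntegrableOn (fun t => (f' ε t)^2) (Set.Ioc u v) volume :=
      (((hf'c ε hε).mono hsub2).pow 2).integrableOn_Icc.mono_set Set.Ioc_subset_Icc_self
    have h1 : ∫ t in Set.Ioc u v, (f' ε t) ^ 2
        = (∫⁻ t in Set.Ioc u v, ENNReal.ofReal ((f' ε t) ^ 2)).toReal :=
      integral_eq_lintegral_of_nonneg_ae (Filter.Eventually.of_forall fun t => sq_nonneg _)
        hci.aestronglyMeasurable
    have h2 : (∫⁻ t in Set.Ioc u v, ENNReal.ofReal ((f' ε t) ^ 2))
        ≤ ∫⁻ t in Set.Ioc u v, ENNReal.ofReal (a ε t * (f' ε t) ^ 2) := by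
      refine lintegral_mono_ae ?_
      filter_upwards [ae_restrict_mem measurableSet_Ioc] with t ht
      refine ENNReal.ofReal_le_ofReal ?_
      have h1a := ha_ge ε hε t (hsub (Set.Ioc_subset_Icc_self ht))
      nlinarith [sq_nonneg (f' ε t)]
    have h3 : (∫⁻ t in Set.Ioc u v, ENNReal.ofReal (a ε t * (f' ε t) ^ 2))
        ≤ ∫⁻ t in Set.Ioo (0:ℝ) 1, ENNReal.ofReal (a ε t * (f' ε t) ^ 2) :=
      lintegral_mono_set (fun x hx => hIccSub hε (hsub (Set.Ioc_subset_Icc_self hx)))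
    have h5 : (∫⁻ t in Set.Ioc u v, ENNReal.ofReal ((f' ε t) ^ 2)) ≤ ENNReal.ofReal C₁ :=
      le_trans (le_trans h2 h3) (le_trans (hCE ε hε)
        (ENNReal.ofReal_le_ofReal (le_max_left _ _)))
    rw [h1]
    calc (∫⁻ t in Set.Ioc u v, ENNReal.ofReal ((f' ε t) ^ 2)).toReal
        ≤ (ENNReal.ofReal C₁).toReal := ENNReal.toReal_mono ENNReal.ofReal_ne_top h5
      _ = C₁ := ENNReal.toReal_ofReal hC₁
  -- uniform Hölder estimate
  have hHolder : ∀ ε ∈ Set.Ioo (0:ℝ) (1/2), ∀ x ∈ Set.Icc ε (1-ε), ∀ y ∈ Set.Icc ε (1-ε),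
      |f ε y - f ε x| ≤ K * Real.sqrt |y - x| := by
    intro ε hε x hx y hy
    have main : ∀ p q : ℝ, p ∈ Set.Icc ε (1-ε) → q ∈ Set.Icc ε (1-ε) → p ≤ q →
        |f ε q - f ε p| ≤ K * Real.sqrt (q - p) := by
      intro p q hp hq hpq
      have hsub : Set.Icc p q ⊆ Set.Ioo 0 1 := fun t ht =>
        hIccSub hε (Set.Icc_subset_Icc hp.1 hq.2 ht)
      exact tc_holder_aux (fun t ht => hderiv ε hε t (hsub ht))
        ((hf'c ε hε).mono hsub) hpq (energy ε hε p q hp.1 hpq hq.2)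
    rcases le_total x y with h | h
    · rw [abs_of_nonneg (sub_nonneg.mpr h)]
      exact main x y hx hy h
    · rw [abs_sub_comm y x, abs_of_nonneg (sub_nonneg.mpr h), abs_sub_comm]
      exact main y x hy hx h
  have hfc : ∀ ε ∈ Set.Ioo (0:ℝ) (1/2), ContinuousOn (f ε) (Set.Ioo 0 1) :=
    fun ε hε x hx => ((hderiv ε hε x hx).continuousAt).continuousWithinAt
  -- the average estimate
  have hAvg : ∀ ε ∈ Set.Ioo (0:ℝ) (1/2), ∀ c δ z : ℝ, 0 < δ → ε ≤ c - δ → c + δ ≤ 1 - ε →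
      z ∈ Set.Icc ε (1-ε) → |tcAvg (f ε) c δ - f ε z| ≤ K * Real.sqrt (|c - z| + δ) := by
    intro ε hε c δ z hδ h1 h2 hz
    have hIccsub : Set.Icc (c-δ) (c+δ) ⊆ Set.Icc ε (1-ε) := Set.Icc_subset_Icc h1 h2
    have hfint : IntegrableOn (f ε) (Set.Ioc (c-δ) (c+δ)) volume :=
      (((hfc ε hε).mono (fun t ht => hIccSub hε (hIccsub ht))).integrableOn_Icc).mono_set
        Set.Ioc_subset_Icc_self
    have hvol : volume (Set.Ioc (c-δ) (c+δ)) = ENNReal.ofReal (2*δ) := by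
      rw [Real.volume_Ioc]
      congr 1
      ring
    have hvolfin : volume (Set.Ioc (c-δ) (c+δ)) < ⊤ := by
      rw [hvol]; exact ENNReal.ofReal_lt_top
    have hM : ∀ t ∈ Set.Ioc (c-δ) (c+δ), ‖f ε t - f ε z‖ ≤ K * Real.sqrt (|c - z| + δ) := by
      intro t ht
      have ht' : t ∈ Set.Icc ε (1-ε) := hIccsub (Set.Ioc_subset_Icc_self ht)
      have habs : |t - z| ≤ |c - z| + δ := by
        have h1' : c - δ ≤ t := le_of_lt ht.1
        have h2' : t ≤ c + δ := ht.2
        rw [abs_le]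
        rcases abs_le.mp (le_refl |c - z|) with ⟨ha, hb⟩
        constructor <;> [linarith; linarith]
      calc ‖f ε t - f ε z‖ = |f ε t - f ε z| := rfl
        _ ≤ K * Real.sqrt |t - z| := hHolder ε hε z hz t ht'
        _ ≤ K * Real.sqrt (|c - z| + δ) :=
            mul_le_mul_of_nonneg_left (Real.sqrt_le_sqrt habs) hK
    have hconstint : IntegrableOn (fun _ : ℝ => f ε z) (Set.Ioc (c-δ) (c+δ)) volume :=
      integrableOn_const hvolfin.ne
    have hint2 : IntegrableOn (fun t => f ε t - f ε z) (Set.Ioc (c-δ) (c+δ)) volume :=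
      hfint.sub hconstint
    have hkey : ‖∫ t in Set.Ioc (c-δ) (c+δ), (f ε t - f ε z)‖
        ≤ (K * Real.sqrt (|c - z| + δ)) * (volume (Set.Ioc (c-δ) (c+δ))).toReal :=
      norm_setIntegral_le_of_norm_le_const hvolfin hM
    have hsplit : ∫ t in Set.Ioc (c-δ) (c+δ), (f ε t - f ε z)
        = (∫ t in Set.Ioc (c-δ) (c+δ), f ε t) - (2*δ) * f ε z := by
      rw [integral_sub hfint hconstint, setIntegral_const, measureReal_def, hvol,
        ENNReal.toReal_ofReal (by linarith), smul_eq_mul]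
    have h2δ : (0:ℝ) < 2*δ := by linarith
    have hrw : tcAvg (f ε) c δ - f ε z
        = (∫ t in Set.Ioc (c-δ) (c+δ), (f ε t - f ε z)) / (2*δ) := by
      rw [hsplit, tcAvg]
      field_simp
    rw [hrw, abs_div, abs_of_pos h2δ, div_le_iff₀ h2δ]
    calc |∫ t in Set.Ioc (c-δ) (c+δ), (f ε t - f ε z)|
        = ‖∫ t in Set.Ioc (c-δ) (c+δ), (f ε t - f ε z)‖ := (Real.norm_eq_abs _).symm
      _ ≤ (K * Real.sqrt (|c - z| + δ)) * (volume (Set.Ioc (c-δ) (c+δ))).toReal := hkey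
      _ = K * Real.sqrt (|c - z| + δ) * (2*δ) := by
          rw [hvol, ENNReal.toReal_ofReal (by linarith)]
  -- convergence of averages
  have hconv : ∀ c δ : ℝ, 0 < δ → 0 < c - δ → c + δ < 1 →
      Filter.Tendsto (fun ε => tcAvg (f ε) c δ) l (𝓝 (tcAvg flim c δ)) := by
    intro c δ hδ h1 h2
    have hSsub : Set.Ioc (c-δ) (c+δ) ⊆ Set.Ioo (0:ℝ) 1 := fun t ht =>
      ⟨lt_of_lt_of_le h1 (le_of_lt ht.1), lt_of_le_of_lt ht.2 h2⟩
    set g : ℝ → ℝ := (Set.Ioc (c-δ) (c+δ)).indicator (fun _ => (1:ℝ)) with hg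
    have hgmeas : Measurable g := measurable_const.indicator measurableSet_Ioc
    have hgL2 : (∫⁻ x in Set.Ioo (0:ℝ) 1, ENNReal.ofReal ((g x)^2)) < ⊤ := by
      have hb : ∀ x : ℝ, ENNReal.ofReal ((g x)^2) ≤ 1 := by
        intro x
        by_cases hx : x ∈ Set.Ioc (c-δ) (c+δ) <;>
          simp [hg, Set.indicator_of_mem, Set.indicator_of_notMem, hx]
      calc (∫⁻ x in Set.Ioo (0:ℝ) 1, ENNReal.ofReal ((g x)^2))
          ≤ ∫⁻ _ in Set.Ioo (0:ℝ) 1, 1 := lintegral_mono (fun x => hb x)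
        _ = volume (Set.Ioo (0:ℝ) 1) := by simp
        _ < ⊤ := by simp [Real.volume_Ioo]
    have key : ∀ h : ℝ → ℝ, (∫ x in Set.Ioo (0:ℝ) 1, h x * g x)
        = ∫ t in Set.Ioc (c-δ) (c+δ), h t := by
      intro h
      have heq : (fun x => h x * g x) = (Set.Ioc (c-δ) (c+δ)).indicator h := by
        funext x
        by_cases hx : x ∈ Set.Ioc (c-δ) (c+δ) <;> simp [hg, hx]
      rw [heq, integral_indicator measurableSet_Ioc,
        Measure.restrict_restrict measurableSet_Ioc,
        Set.inter_eq_self_of_subset_left hSsub]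
    have hw := hweak g hgmeas hgL2
    rw [key flim] at hw
    have heq2 : (fun ε => ∫ x in Set.Ioo (0:ℝ) 1, f ε x * g x)
        = fun ε => ∫ t in Set.Ioc (c-δ) (c+δ), f ε t := funext fun ε => key (f ε)
    rw [heq2] at hw
    exact hw.div_const (2*δ)
  -- master estimate on averages of the limit
  have hE1 : ∀ c δ c' δ' : ℝ, 0 < δ → 0 < c - δ → c + δ < 1 → 0 < δ' → 0 < c' - δ' →
      c' + δ' < 1 →
      |tcAvg flim c δ - tcAvg flim c' δ'| ≤ K * (Real.sqrt δ + Real.sqrt (|c' - c| + δ')) := by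
    intro c δ c' δ' hδ h1 h2 hδ' h1' h2'
    have hm0 : 0 < min (min (c-δ) (c'-δ')) (min (1-(c+δ)) (1-(c'+δ'))) :=
      lt_min (lt_min h1 h1') (lt_min (by linarith) (by linarith))
    have hev1 : ∀ᶠ ε in l, |tcAvg (f ε) c δ - tcAvg (f ε) c' δ'|
        ≤ K * (Real.sqrt δ + Real.sqrt (|c' - c| + δ')) := by
      filter_upwards [hev _ hm0, hmem] with ε hεm hε
      have i1 : ε ≤ c - δ := le_of_lt (lt_of_lt_of_le hεm
        (le_trans (min_le_left _ _) (min_le_left _ _)))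
      have i2 : ε ≤ c' - δ' := le_of_lt (lt_of_lt_of_le hεm
        (le_trans (min_le_left _ _) (min_le_right _ _)))
      have i3 : ε ≤ 1 - (c + δ) := le_of_lt (lt_of_lt_of_le hεm
        (le_trans (min_le_right _ _) (min_le_left _ _)))
      have i4 : ε ≤ 1 - (c' + δ') := le_of_lt (lt_of_lt_of_le hεm
        (le_trans (min_le_right _ _) (min_le_right _ _)))
      have hc_mem : c ∈ Set.Icc ε (1-ε) := ⟨by linarith, by linarith⟩
      have e1 := hAvg ε hε c δ c hδ i1 (by linarith) hc_mem
      have e2 := hAvg ε hε c' δ' c hδ' i2 (by linarith) hc_mem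
      have e1' : |tcAvg (f ε) c δ - f ε c| ≤ K * Real.sqrt δ := by
        simpa using e1
      calc |tcAvg (f ε) c δ - tcAvg (f ε) c' δ'|
          ≤ |tcAvg (f ε) c δ - f ε c| + |f ε c - tcAvg (f ε) c' δ'| := abs_sub_le _ _ _
        _ ≤ K * Real.sqrt δ + K * Real.sqrt (|c' - c| + δ') := by
            refine add_le_add e1' ?_
            rw [abs_sub_comm]
            exact e2
        _ = K * (Real.sqrt δ + Real.sqrt (|c' - c| + δ')) := by ring
    have ht : Filter.Tendsto (fun ε => |tcAvg (f ε) c δ - tcAvg (f ε) c' δ'|) l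
        (𝓝 |tcAvg flim c δ - tcAvg flim c' δ'|) :=
      ((hconv c δ hδ h1 h2).sub (hconv c' δ' hδ' h1' h2')).abs
    exact le_of_tendsto ht hev1
  -- existence of the pointwise limit of averages
  have hF : ∀ x ∈ Set.Ioo (0:ℝ) 1,
      Filter.Tendsto (fun δ => tcAvg flim x δ) (𝓝[>] (0:ℝ)) (𝓝 (tcF flim x)) := by
    intro x hx
    have hcauchy : Cauchy (Filter.map (fun δ => tcAvg flim x δ) (𝓝[>] (0:ℝ))) := by
      rw [Metric.cauchy_iff]
      refine ⟨Filter.map_neBot, ?_⟩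
      intro η hη
      have hθ0 : 0 < min (min x (1-x)) ((η/(2*K+1))^2) :=
        lt_min (lt_min hx.1 (by linarith [hx.2])) (by positivity)
      refine ⟨(fun δ => tcAvg flim x δ) '' (Set.Ioo 0 (min (min x (1-x)) ((η/(2*K+1))^2))),
        Filter.image_mem_map (Ioo_mem_nhdsGT_of_mem ⟨le_refl 0, hθ0⟩), ?_⟩
      rintro _ ⟨δ, hδ, rfl⟩ _ ⟨δ', hδ', rfl⟩
      have hsq : ∀ s : ℝ, s ∈ Set.Ioo 0 (min (min x (1-x)) ((η/(2*K+1))^2)) →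
          Real.sqrt s ≤ η/(2*K+1) := by
        intro s hs
        have : s ≤ (η/(2*K+1))^2 := le_of_lt (lt_of_lt_of_le hs.2 (min_le_right _ _))
        calc Real.sqrt s ≤ Real.sqrt ((η/(2*K+1))^2) := Real.sqrt_le_sqrt this
          _ = η/(2*K+1) := Real.sqrt_sq (by positivity)
      have hδx : δ < min x (1-x) := lt_of_lt_of_le hδ.2 (min_le_left _ _)
      have hδ'x : δ' < min x (1-x) := lt_of_lt_of_le hδ'.2 (min_le_left _ _)
      have hb := hE1 x δ x δ' hδ.1
        (by have := min_le_left x (1-x); linarith)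
        (by have := min_le_right x (1-x); linarith) hδ'.1
        (by have := min_le_left x (1-x); linarith)
        (by have := min_le_right x (1-x); linarith)
      rw [Real.dist_eq]
      have hb' : |tcAvg flim x δ - tcAvg flim x δ'|
          ≤ K * (Real.sqrt δ + Real.sqrt δ') := by simpa using hb
      have hKη : K * (Real.sqrt δ + Real.sqrt δ') ≤ 2*K * (η/(2*K+1)) := by
        have s1 := hsq δ hδ
        have s2 := hsq δ' hδ'
        nlinarith [Real.sqrt_nonneg δ, Real.sqrt_nonneg δ']
      have hfin : 2*K * (η/(2*K+1)) < η := by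
        rw [div_eq_mul_inv]
        have h2K : (0:ℝ) < 2*K+1 := by linarith
        rw [show 2*K*(η*(2*K+1)⁻¹) = η * ((2*K)/(2*K+1)) by field_simp]
        have : (2*K)/(2*K+1) < 1 := by
          rw [div_lt_one h2K]; linarith
        nlinarith
      linarith
    obtain ⟨L, hL⟩ := CompleteSpace.complete hcauchy
    have hL' : Filter.Tendsto (fun δ => tcAvg flim x δ) (𝓝[>] (0:ℝ)) (𝓝 L) := hL
    rw [show tcF flim x = L from hL'.limUnder_eq]
    exact hL'
  -- Hölder estimate for tcF
  have hFHolder : ∀ x ∈ Set.Ioo (0:ℝ) 1, ∀ y ∈ Set.Ioo (0:ℝ) 1,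
      |tcF flim x - tcF flim y| ≤ K * Real.sqrt |y - x| := by
    intro x hx y hy
    have hLHS : Filter.Tendsto (fun δ => |tcAvg flim x δ - tcAvg flim y δ|) (𝓝[>] (0:ℝ))
        (𝓝 |tcF flim x - tcF flim y|) := ((hF x hx).sub (hF y hy)).abs
    have hRHS : Filter.Tendsto (fun δ : ℝ => K * (Real.sqrt δ + Real.sqrt (|y - x| + δ)))
        (𝓝[>] (0:ℝ)) (𝓝 (K * Real.sqrt |y - x|)) := by
      have hcont : Continuous (fun δ : ℝ => K * (Real.sqrt δ + Real.sqrt (|y - x| + δ))) :=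
        continuous_const.mul (Real.continuous_sqrt.add
          (Real.continuous_sqrt.comp (continuous_const.add continuous_id)))
      have h0 := hcont.tendsto 0
      simp only [Real.sqrt_zero, add_zero, zero_add] at h0
      exact h0.mono_left nhdsWithin_le_nhds
    have hm0 : 0 < min (min x (1-x)) (min y (1-y)) :=
      lt_min (lt_min hx.1 (by linarith [hx.2])) (lt_min hy.1 (by linarith [hy.2]))
    refine le_of_tendsto_of_tendsto hLHS hRHS ?_
    filter_upwards [Ioo_mem_nhdsGT_of_mem ⟨le_refl (0:ℝ), hm0⟩] with δ hδ
    have d1 : δ < x := lt_of_lt_of_le hδ.2 (le_trans (min_le_left _ _) (min_le_left _ _))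
    have d2 : δ < 1-x := lt_of_lt_of_le hδ.2 (le_trans (min_le_left _ _) (min_le_right _ _))
    have d3 : δ < y := lt_of_lt_of_le hδ.2 (le_trans (min_le_right _ _) (min_le_left _ _))
    have d4 : δ < 1-y := lt_of_lt_of_le hδ.2 (le_trans (min_le_right _ _) (min_le_right _ _))
    exact hE1 x δ y δ hδ.1 (by linarith) (by linarith) hδ.1 (by linarith) (by linarith)
  -- distance from average to tcF
  have hAF : ∀ c ∈ Set.Ioo (0:ℝ) 1, ∀ δ : ℝ, 0 < δ → 0 < c - δ → c + δ < 1 →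
      |tcAvg flim c δ - tcF flim c| ≤ K * Real.sqrt δ := by
    intro c hc δ hδ h1 h2
    have hLHS : Filter.Tendsto (fun δ' => |tcAvg flim c δ - tcAvg flim c δ'|) (𝓝[>] (0:ℝ))
        (𝓝 |tcAvg flim c δ - tcF flim c|) := (tendsto_const_nhds.sub (hF c hc)).abs
    have hRHS : Filter.Tendsto (fun δ' : ℝ => K * (Real.sqrt δ + Real.sqrt δ')) (𝓝[>] (0:ℝ))
        (𝓝 (K * (Real.sqrt δ + 0))) := by
      have hcont : Continuous (fun δ' : ℝ => K * (Real.sqrt δ + Real.sqrt δ')) :=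
        continuous_const.mul (continuous_const.add Real.continuous_sqrt)
      have h0 := hcont.tendsto 0
      simp only [Real.sqrt_zero] at h0
      exact h0.mono_left nhdsWithin_le_nhds
    rw [show K * Real.sqrt δ = K * (Real.sqrt δ + 0) by ring]
    have hm0 : 0 < min c (1-c) := lt_min hc.1 (by linarith [hc.2])
    refine le_of_tendsto_of_tendsto hLHS hRHS ?_
    filter_upwards [Ioo_mem_nhdsGT_of_mem ⟨le_refl (0:ℝ), hm0⟩] with δ' hδ'
    have d1 : δ' < c := lt_of_lt_of_le hδ'.2 (min_le_left _ _)
    have d2 : δ' < 1-c := lt_of_lt_of_le hδ'.2 (min_le_right _ _)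
    have := hE1 c δ c δ' hδ h1 h2 hδ'.1 (by linarith) (by linarith)
    simpa using this
  -- existence of limits of tcF at every point of [0,1]
  have hfbar : ∀ x ∈ Set.Icc (0:ℝ) 1,
      Filter.Tendsto (tcF flim) (𝓝[Set.Ioo (0:ℝ) 1] x) (𝓝 (tcBar flim x)) := by
    intro x hx
    haveI hNB : (𝓝[Set.Ioo (0:ℝ) 1] x).NeBot := by
      refine mem_closure_iff_nhdsWithin_neBot.mp ?_
      rw [closure_Ioo (by norm_num : (0:ℝ) ≠ 1)]
      exact hx
    have hcauchy : Cauchy (Filter.map (tcF flim) (𝓝[Set.Ioo (0:ℝ) 1] x)) := by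
      rw [Metric.cauchy_iff]
      refine ⟨Filter.map_neBot, ?_⟩
      intro η hη
      set r : ℝ := (η/(2*(K+1)))^2 with hr
      have hr0 : 0 < r := by positivity
      refine ⟨tcF flim '' (Set.Ioo 0 1 ∩ Metric.ball x r),
        Filter.image_mem_map (Filter.inter_mem self_mem_nhdsWithin
          (mem_nhdsWithin_of_mem_nhds (Metric.ball_mem_nhds x hr0))), ?_⟩
      rintro _ ⟨u, hu, rfl⟩ _ ⟨v, hv, rfl⟩
      rw [Real.dist_eq]
      have huv : |v - u| ≤ 2*r := by
        have h1 := hu.2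
        have h2 := hv.2
        rw [Metric.mem_ball, Real.dist_eq] at h1 h2
        rcases abs_lt.mp h1 with ⟨a1, a2⟩
        rcases abs_lt.mp h2 with ⟨b1, b2⟩
        rw [abs_le]
        constructor <;> linarith
      have hle := hFHolder u hu.1 v hv.1
      have : Real.sqrt |v - u| ≤ Real.sqrt (2*r) := Real.sqrt_le_sqrt huv
      have h2r : Real.sqrt (2*r) ≤ 2 * (η/(2*(K+1))) := by
        rw [hr]
        calc Real.sqrt (2*(η/(2*(K+1)))^2) ≤ Real.sqrt ((2*(η/(2*(K+1))))^2) := by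
              apply Real.sqrt_le_sqrt
              nlinarith [sq_nonneg (η/(2*(K+1)))]
          _ = 2*(η/(2*(K+1))) := Real.sqrt_sq (by positivity)
      have hfin : K * (2 * (η/(2*(K+1)))) < η := by
        have hKp : (0:ℝ) < K + 1 := by linarith
        rw [show K * (2 * (η/(2*(K+1)))) = η * (K/(K+1)) by field_simp]
        have : K/(K+1) < 1 := by rw [div_lt_one hKp]; linarith
        nlinarith
      calc |tcF flim u - tcF flim v| ≤ K * Real.sqrt |v - u| := hle
        _ ≤ K * (2 * (η/(2*(K+1)))) := by
            refine mul_le_mul_of_nonneg_left (le_trans this h2r) hK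
        _ < η := hfin
    obtain ⟨L, hL⟩ := CompleteSpace.complete hcauchy
    have hL' : Filter.Tendsto (tcF flim) (𝓝[Set.Ioo (0:ℝ) 1] x) (𝓝 L) := hL
    rw [show tcBar flim x = L from hL'.limUnder_eq]
    exact hL'
  -- tcBar agrees with tcF in the interior
  have hfbarF : ∀ x ∈ Set.Ioo (0:ℝ) 1, tcBar flim x = tcF flim x := by
    intro x hx
    haveI hNB : (𝓝[Set.Ioo (0:ℝ) 1] x).NeBot := by
      refine mem_closure_iff_nhdsWithin_neBot.mp ?_
      rw [closure_Ioo (by norm_num : (0:ℝ) ≠ 1)]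
      exact Set.Ioo_subset_Icc_self hx
    have hto : Filter.Tendsto (tcF flim) (𝓝[Set.Ioo (0:ℝ) 1] x) (𝓝 (tcF flim x)) := by
      rw [Metric.tendsto_nhdsWithin_nhds]
      intro η hη
      refine ⟨(η/(K+1))^2, by positivity, ?_⟩
      intro y hy hd
      rw [Real.dist_eq] at hd ⊢
      calc |tcF flim y - tcF flim x| ≤ K * Real.sqrt |x - y| := hFHolder y hy x hx
        _ ≤ K * (η/(K+1)) := by
            refine mul_le_mul_of_nonneg_left ?_ hK
            rw [abs_sub_comm]
            calc Real.sqrt |y - x| ≤ Real.sqrt ((η/(K+1))^2) :=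
                  Real.sqrt_le_sqrt (le_of_lt hd)
              _ = η/(K+1) := Real.sqrt_sq (by positivity)
        _ < η := by
            have hKp : (0:ℝ) < K + 1 := by linarith
            rw [show K * (η/(K+1)) = η * (K/(K+1)) by field_simp]
            have : K/(K+1) < 1 := by rw [div_lt_one hKp]; linarith
            nlinarith
    exact hto.limUnder_eq
  -- Hölder estimate for tcBar on [0,1]
  have hBarHolder : ∀ x ∈ Set.Icc (0:ℝ) 1, ∀ y ∈ Set.Icc (0:ℝ) 1,
      |tcBar flim x - tcBar flim y| ≤ K * Real.sqrt |y - x| := by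
    intro x hx y hy
    haveI hNBx : (𝓝[Set.Ioo (0:ℝ) 1] x).NeBot := by
      refine mem_closure_iff_nhdsWithin_neBot.mp ?_
      rw [closure_Ioo (by norm_num : (0:ℝ) ≠ 1)]; exact hx
    haveI hNBy : (𝓝[Set.Ioo (0:ℝ) 1] y).NeBot := by
      refine mem_closure_iff_nhdsWithin_neBot.mp ?_
      rw [closure_Ioo (by norm_num : (0:ℝ) ≠ 1)]; exact hy
    set l2 : Filter (ℝ × ℝ) := (𝓝[Set.Ioo (0:ℝ) 1] x) ×ˢ (𝓝[Set.Ioo (0:ℝ) 1] y) with hl2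
    haveI : l2.NeBot := Filter.prod_neBot.mpr ⟨hNBx, hNBy⟩
    have hLHS : Filter.Tendsto (fun p : ℝ × ℝ => |tcF flim p.1 - tcF flim p.2|) l2
        (𝓝 |tcBar flim x - tcBar flim y|) :=
      (((hfbar x hx).comp Filter.tendsto_fst).sub ((hfbar y hy).comp Filter.tendsto_snd)).abs
    have hRHS : Filter.Tendsto (fun p : ℝ × ℝ => K * Real.sqrt |p.2 - p.1|) l2
        (𝓝 (K * Real.sqrt |y - x|)) := by
      have hcont : Continuous (fun p : ℝ × ℝ => K * Real.sqrt |p.2 - p.1|) :=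
        continuous_const.mul (Real.continuous_sqrt.comp (continuous_snd.sub continuous_fst).abs)
      have h0 := hcont.tendsto (x, y)
      refine h0.mono_left ?_
      rw [hl2, nhds_prod_eq]
      exact Filter.prod_mono nhdsWithin_le_nhds nhdsWithin_le_nhds
    refine le_of_tendsto_of_tendsto hLHS hRHS ?_
    rw [hl2]
    filter_upwards [Filter.prod_mem_prod self_mem_nhdsWithin self_mem_nhdsWithin] with p hp
    exact hFHolder p.1 hp.1 p.2 hp.2
  -- continuity of tcBar
  have hCont : ContinuousOn (tcBar flim) (Set.Icc 0 1) := by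
    intro x hx
    rw [Metric.continuousWithinAt_iff]
    intro η hη
    refine ⟨(η/(K+1))^2, by positivity, ?_⟩
    intro y hy hd
    rw [Real.dist_eq] at hd ⊢
    calc |tcBar flim y - tcBar flim x| = |tcBar flim x - tcBar flim y| := abs_sub_comm _ _
      _ ≤ K * Real.sqrt |y - x| := hBarHolder x hx y hy
      _ ≤ K * (η/(K+1)) := by
          refine mul_le_mul_of_nonneg_left ?_ hK
          calc Real.sqrt |y - x| ≤ Real.sqrt ((η/(K+1))^2) := Real.sqrt_le_sqrt (le_of_lt hd)
            _ = η/(K+1) := Real.sqrt_sq (by positivity)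
      _ < η := by
          have hKp : (0:ℝ) < K + 1 := by linarith
          rw [show K * (η/(K+1)) = η * (K/(K+1)) by field_simp]
          have : K/(K+1) < 1 := by rw [div_lt_one hKp]; linarith
          nlinarith
  -- a.e. identification with flim
  have hae : ∀ᵐ x ∂(volume.restrict (Set.Ioo (0:ℝ) 1)), tcBar flim x = flim x := by
    have hflimI_int : Integrable ((Set.Ioo (0:ℝ) 1).indicator flim) volume := by
      constructor
      · exact (hflim_meas.indicator measurableSet_Ioo).aestronglyMeasurable
      · rw [hasFiniteIntegral_iff_norm]
        have heq : (fun x => ENNReal.ofReal ‖(Set.Ioo (0:ℝ) 1).indicator flim x‖)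
            = (Set.Ioo (0:ℝ) 1).indicator (fun x => ENNReal.ofReal |flim x|) := by
          funext x
          by_cases hx : x ∈ Set.Ioo (0:ℝ) 1 <;> simp [hx, Real.norm_eq_abs]
        rw [heq, lintegral_indicator measurableSet_Ioo]
        have hb : ∀ x : ℝ, ENNReal.ofReal |flim x| ≤ 1 + ENNReal.ofReal ((flim x)^2) := by
          intro x
          rw [show (1:ℝ≥0∞) + ENNReal.ofReal ((flim x)^2)
              = ENNReal.ofReal (1 + (flim x)^2) by
            rw [ENNReal.ofReal_add zero_le_one (sq_nonneg _), ENNReal.ofReal_one]]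
          exact ENNReal.ofReal_le_ofReal
            (by nlinarith [sq_abs (flim x), sq_nonneg (|flim x| - 1), abs_nonneg (flim x)])
        calc (∫⁻ x in Set.Ioo (0:ℝ) 1, ENNReal.ofReal |flim x|)
            ≤ ∫⁻ x in Set.Ioo (0:ℝ) 1, (1 + ENNReal.ofReal ((flim x)^2)) :=
              lintegral_mono hb
          _ = volume (Set.Ioo (0:ℝ) 1)
              + ∫⁻ x in Set.Ioo (0:ℝ) 1, ENNReal.ofReal ((flim x)^2) := by
              rw [lintegral_add_left measurable_const]
              simp
          _ < ⊤ := ENNReal.add_lt_top.mpr ⟨by simp [Real.volume_Ioo], hflim_L2⟩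
    have hloc : LocallyIntegrable ((Set.Ioo (0:ℝ) 1).indicator flim) volume :=
      hflimI_int.locallyIntegrable
    have hLeb := IsUnifLocDoublingMeasure.ae_tendsto_average
      (μ := (volume : Measure ℝ)) hloc 1
    have h1 : ∀ᵐ x ∂(volume.restrict (Set.Ioo (0:ℝ) 1)),
        Filter.Tendsto (fun r : ℝ => ⨍ y in Metric.closedBall x r,
          (Set.Ioo (0:ℝ) 1).indicator flim y) (𝓝[>] (0:ℝ))
          (𝓝 ((Set.Ioo (0:ℝ) 1).indicator flim x)) := by
      refine ae_restrict_of_ae ?_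
      filter_upwards [hLeb] with x hx
      refine hx (fun _ => x) id tendsto_id ?_
      filter_upwards [self_mem_nhdsWithin] with r hr
      rw [Metric.mem_closedBall, dist_self, one_mul]
      exact le_of_lt hr
    filter_upwards [h1, ae_restrict_mem measurableSet_Ioo] with x hx hxmem
    have hxm0 : 0 < min x (1-x) := lt_min hxmem.1 (by linarith [hxmem.2])
    have heq : ∀ᶠ r in 𝓝[>] (0:ℝ),
        (⨍ y in Metric.closedBall x r, (Set.Ioo (0:ℝ) 1).indicator flim y)
        = tcAvg flim x r := by
      filter_upwards [Ioo_mem_nhdsGT_of_mem ⟨le_refl (0:ℝ), hxm0⟩] with r hr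
      have hr1 : r < x := lt_of_lt_of_le hr.2 (min_le_left _ _)
      have hr2 : r < 1-x := lt_of_lt_of_le hr.2 (min_le_right _ _)
      have hsub : Set.Icc (x-r) (x+r) ⊆ Set.Ioo (0:ℝ) 1 := fun t ht =>
        ⟨by have := ht.1; linarith, by have := ht.2; linarith⟩
      rw [Real.closedBall_eq_Icc, setAverage_eq]
      rw [setIntegral_congr_fun measurableSet_Icc
        (fun y hy => Set.indicator_of_mem (hsub hy) flim)]
      rw [integral_Icc_eq_integral_Ioc, measureReal_def, Real.volume_Icc,
        show x + r - (x - r) = 2*r by ring, ENNReal.toReal_ofReal (by linarith [hr.1])]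
      rw [tcAvg, smul_eq_mul]
      ring
    have ht1 : Filter.Tendsto (fun r => tcAvg flim x r) (𝓝[>] (0:ℝ)) (𝓝 (flim x)) := by
      have h2 := hx.congr' heq
      rwa [Set.indicator_of_mem hxmem] at h2
    have hFx : tcF flim x = flim x := tendsto_nhds_unique (hF x hxmem) ht1
    rw [hfbarF x hxmem, hFx]
  -- trace convergence
  have trace : ∀ b : ℝ, (b = 0 ∨ b = 1) → ∀ z : ℝ → ℝ,
      (∀ ε ∈ Set.Ioo (0:ℝ) (1/2), z ε ∈ Set.Icc ε (1-ε) ∧ |z ε - b| ≤ ε) →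
      Filter.Tendsto (fun ε => f ε (z ε)) l (𝓝 (tcBar flim b)) := by
    intro b hb z hz
    have hbIcc : b ∈ Set.Icc (0:ℝ) 1 := by rcases hb with rfl | rfl <;> norm_num
    rw [Metric.tendsto_nhds]
    intro η hη
    set δ : ℝ := min (1/8) ((η/(8*(K+1)))^2) with hδdef
    have hδ0 : 0 < δ := lt_min (by norm_num) (by positivity)
    have hδ8 : δ ≤ 1/8 := min_le_left _ _
    have hδη : Real.sqrt δ ≤ η/(8*(K+1)) := by
      calc Real.sqrt δ ≤ Real.sqrt ((η/(8*(K+1)))^2) :=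
            Real.sqrt_le_sqrt (min_le_right _ _)
        _ = η/(8*(K+1)) := Real.sqrt_sq (by positivity)
    set c : ℝ := if b = 0 then 2*δ else 1 - 2*δ with hcdef
    have hcb : |c - b| ≤ 2*δ := by
      rcases hb with rfl | rfl
      · rw [hcdef, if_pos rfl, sub_zero, abs_of_nonneg (by linarith)]
      · rw [hcdef, if_neg (by norm_num)]
        rw [show 1 - 2*δ - 1 = -(2*δ) by ring, abs_neg, abs_of_nonneg (by linarith)]
    have hcmem : c ∈ Set.Ioo (0:ℝ) 1 := by
      rcases hb with rfl | rfl
      · rw [hcdef, if_pos rfl]; constructor <;> [linarith; linarith]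
      · rw [hcdef, if_neg (by norm_num)]; constructor <;> [linarith; linarith]
    have hc1 : 0 < c - δ := by
      rcases hb with rfl | rfl
      · rw [hcdef, if_pos rfl]; linarith
      · rw [hcdef, if_neg (by norm_num)]; linarith
    have hc2 : c + δ < 1 := by
      rcases hb with rfl | rfl
      · rw [hcdef, if_pos rfl]; linarith
      · rw [hcdef, if_neg (by norm_num)]; linarith
    have hT3 : |tcAvg flim c δ - tcF flim c| ≤ K * Real.sqrt δ := hAF c hcmem δ hδ0 hc1 hc2
    have hT4 : |tcF flim c - tcBar flim b| ≤ K * Real.sqrt (2*δ) := by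
      have := hBarHolder c (Set.Ioo_subset_Icc_self hcmem) b hbIcc
      rw [hfbarF c hcmem] at this
      refine le_trans this ?_
      refine mul_le_mul_of_nonneg_left (Real.sqrt_le_sqrt ?_) hK
      rw [abs_sub_comm]
      exact hcb
    have hconvδ := hconv c δ hδ0 hc1 hc2
    rw [Metric.tendsto_nhds] at hconvδ
    filter_upwards [hconvδ (η/4) (by linarith), hev δ hδ0, hmem] with ε hT2 hεδ hε
    obtain ⟨hzmem, hzb⟩ := hz ε hε
    -- T1 estimate
    have hεc1 : ε ≤ c - δ := by
      rcases hb with rfl | rfl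
      · rw [hcdef, if_pos rfl]; linarith
      · rw [hcdef, if_neg (by norm_num)]
        have := hε.2
        linarith
    have hεc2 : c + δ ≤ 1 - ε := by
      rcases hb with rfl | rfl
      · rw [hcdef, if_pos rfl]
        have := hε.2
        linarith
      · rw [hcdef, if_neg (by norm_num)]; linarith
    have hT1 : |tcAvg (f ε) c δ - f ε (z ε)| ≤ K * Real.sqrt (4*δ) := by
      have h := hAvg ε hε c δ (z ε) hδ0 hεc1 hεc2 hzmem
      refine le_trans h (mul_le_mul_of_nonneg_left (Real.sqrt_le_sqrt ?_) hK)
      have : |c - z ε| ≤ |c - b| + |b - z ε| := abs_sub_le _ _ _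
      rw [abs_sub_comm b (z ε)] at this
      have : |c - z ε| ≤ 3*δ := by linarith
      linarith
    rw [Real.dist_eq] at hT2 ⊢
    have hsum : |f ε (z ε) - tcBar flim b|
        ≤ |f ε (z ε) - tcAvg (f ε) c δ| + |tcAvg (f ε) c δ - tcAvg flim c δ|
          + |tcAvg flim c δ - tcF flim c| + |tcF flim c - tcBar flim b| := by
      have i1 : |f ε (z ε) - tcBar flim b|
          ≤ |f ε (z ε) - tcF flim c| + |tcF flim c - tcBar flim b| := abs_sub_le _ _ _
      have i2 : |f ε (z ε) - tcF flim c|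
          ≤ |f ε (z ε) - tcAvg flim c δ| + |tcAvg flim c δ - tcF flim c| := abs_sub_le _ _ _
      have i3 : |f ε (z ε) - tcAvg flim c δ|
          ≤ |f ε (z ε) - tcAvg (f ε) c δ| + |tcAvg (f ε) c δ - tcAvg flim c δ| :=
        abs_sub_le _ _ _
      linarith
    have hs4 : Real.sqrt (4*δ) ≤ 2 * (η/(8*(K+1))) := by
      calc Real.sqrt (4*δ) = 2 * Real.sqrt δ := by
            rw [show (4:ℝ)*δ = 2^2 * δ by ring, Real.sqrt_mul (by positivity),
              Real.sqrt_sq (by norm_num)]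
        _ ≤ 2 * (η/(8*(K+1))) := by linarith
    have hs2 : Real.sqrt (2*δ) ≤ 2 * (η/(8*(K+1))) := by
      refine le_trans (Real.sqrt_le_sqrt (by linarith : 2*δ ≤ 4*δ)) hs4
    have hKmul : K * (η/(8*(K+1))) ≤ η/8 := by
      have hKp : (0:ℝ) < K + 1 := by linarith
      rw [show K * (η/(8*(K+1))) = (η/8) * (K/(K+1)) by field_simp]
      have h1 : K/(K+1) ≤ 1 := by rw [div_le_one hKp]; linarith
      nlinarith
    have hb1 : K * Real.sqrt (4*δ) ≤ η/4 := by
      calc K * Real.sqrt (4*δ) ≤ K * (2 * (η/(8*(K+1)))) :=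
            mul_le_mul_of_nonneg_left hs4 hK
        _ = 2 * (K * (η/(8*(K+1)))) := by ring
        _ ≤ 2 * (η/8) := by linarith
        _ = η/4 := by ring
    have hb3 : K * Real.sqrt δ ≤ η/8 := by
      calc K * Real.sqrt δ ≤ K * (η/(8*(K+1))) := mul_le_mul_of_nonneg_left hδη hK
        _ ≤ η/8 := hKmul
    have hb4 : K * Real.sqrt (2*δ) ≤ η/4 := by
      calc K * Real.sqrt (2*δ) ≤ K * (2 * (η/(8*(K+1)))) :=
            mul_le_mul_of_nonneg_left hs2 hK
        _ = 2 * (K * (η/(8*(K+1)))) := by ring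
        _ ≤ 2 * (η/8) := by linarith
        _ = η/4 := by ring
    have hT1' : |f ε (z ε) - tcAvg (f ε) c δ| ≤ η/4 := by
      rw [abs_sub_comm]; linarith
    linarith
  refine ⟨tcBar flim, hCont, hae, ?_, ?_⟩
  · refine trace 0 (Or.inl rfl) (fun ε => ε) ?_
    intro ε hε
    constructor
    · show ε ∈ Set.Icc ε (1 - ε)
      exact ⟨le_refl ε, by linarith [hε.2]⟩
    · show |ε - 0| ≤ ε
      rw [sub_zero, abs_of_pos hε.1]
  · refine trace 1 (Or.inr rfl) (fun ε => 1 - ε) ?_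
    intro ε hε
    constructor
    · show 1 - ε ∈ Set.Icc ε (1 - ε)
      exact ⟨by linarith [hε.2], le_refl _⟩
    · show |1 - ε - 1| ≤ ε
      rw [show 1 - ε - 1 = -ε by ring, abs_neg, abs_of_pos hε.1]
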